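/- Let φ be a real-valued Schwartz function on ℝ whose Fourier transform φ̂ vanishes outside [−1/2, 1/2], let n ≥ 1, and define f̃_n(x₁,x₂) = φ(x₁) sin(2ⁿ x₁) φ(x₂). Then the (2D) Fourier transform of f̃_n is supported in the annulus C_n = { ξ ∈ ℝ² : 2ⁿ − 1 ≤ |ξ| ≤ 2ⁿ + 1 }. -/

import Mathlib

noncomputable section

open MeasureTheory Filter Topology
open scoped Real RealInnerProductSpace BigOperators

/-- The plane `ℝ²` with its Euclidean structure. -/
abbrev E2 : Type := EuclideanSpace ℝ (Fin 2)

/-- Fourier transform on `ℝ²` with the convention `f̂(ξ) = ∫ e^{-i x·ξ} f(x) dx`. -/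
def ft2 (f : E2 → ℂ) (ξ : E2) : ℂ :=
  ∫ x : E2, Complex.exp (-Complex.I * (⟪x, ξ⟫ : ℂ)) * f x

/-- Squared `H^s` norm of a scalar function on `ℝ²`:
`‖f‖²_{H^s} = ∫ (1+|ξ|²)^s |f̂(ξ)|² dξ`. -/
def hsNormSq (s : ℝ) (f : E2 → ℝ) : ℝ :=
  ∫ ξ : E2, (1 + ‖ξ‖ ^ 2) ^ s * ‖ft2 (fun x => (f x : ℂ)) ξ‖ ^ 2

/-- The `H^s` norm. -/
def hsNorm (s : ℝ) (f : E2 → ℝ) : ℝ := Real.sqrt (hsNormSq s f)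

/-- Membership in `H^s(ℝ²)` (in a form making the above norm meaningful). -/
def MemHs (s : ℝ) (f : E2 → ℝ) : Prop :=
  Integrable (fun x => (f x : ℂ)) ∧
  Integrable (fun ξ : E2 =>
    (1 + ‖ξ‖ ^ 2) ^ s * ‖ft2 (fun x => (f x : ℂ)) ξ‖ ^ 2)

/-- `H^s` norm of a vector field: the sum of the norms of the components. -/
def hsNormVec (s : ℝ) (u : E2 → E2) : ℝ := ∑ i : Fin 2, hsNorm s fun x => u x i

/-- A vector field belongs to `H^s` iff each of its components does. -/
def MemHsVec (s : ℝ) (u : E2 → E2) : Prop := ∀ i : Fin 2, MemHs s fun x => u x i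

/-- Partial derivative `∂ᵢ` of a scalar function on `ℝ²`. -/
def pd (i : Fin 2) (f : E2 → ℝ) (x : E2) : ℝ := fderiv ℝ f x (EuclideanSpace.single i 1)

/-- Divergence of a vector field on `ℝ²`. -/
def divg (u : E2 → E2) (x : E2) : ℝ := ∑ i : Fin 2, pd i (fun y => u y i) x

/-- Laplacian of a scalar function on `ℝ²`. -/
def lap (f : E2 → ℝ) (x : E2) : ℝ := ∑ i : Fin 2, pd i (fun y => pd i f y) x

/-- `(u, ϱ)` solves the 2D viscous shallow water system (with viscosity `μ`)
`∂_t ϱ + div u + u·∇ϱ = −ϱ div u`,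
`∂_t u − μΔu − μ∇(div u) + u·∇u + ∇ϱ = 2∇(ln(1+ϱ))·𝔻u`
pointwise for times in `I`. -/
def IsSWESolution (μ : ℝ) (I : Set ℝ) (u : ℝ → E2 → E2) (ϱ : ℝ → E2 → ℝ) : Prop :=
  ∀ t ∈ I, ∀ x : E2,
    (deriv (fun τ => ϱ τ x) t + divg (u t) x + (∑ i : Fin 2, u t x i * pd i (ϱ t) x)
        = -(ϱ t x * divg (u t) x)) ∧
    ∀ j : Fin 2,
      deriv (fun τ => u τ x j) t - μ * lap (fun y => u t y j) x - μ * pd j (divg (u t)) x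
          + (∑ i : Fin 2, u t x i * pd i (fun y => u t y j) x) + pd j (ϱ t) x
        = ∑ i : Fin 2, pd i (fun y => Real.log (1 + ϱ t y)) x
            * (pd i (fun y => u t y j) x + pd j (fun y => u t y i) x)

/-- `(u, ϱ)` solves the linearized viscous shallow water system
`∂_t ϱ + div u = 0`, `∂_t u − μΔu − μ∇(div u) + ∇ϱ = 0`
pointwise for times in `I`. -/
def IsLinSWESolution (μ : ℝ) (I : Set ℝ) (u : ℝ → E2 → E2) (ϱ : ℝ → E2 → ℝ) : Prop :=
  ∀ t ∈ I, ∀ x : E2,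
    (deriv (fun τ => ϱ τ x) t + divg (u t) x = 0) ∧
    ∀ j : Fin 2,
      deriv (fun τ => u τ x j) t - μ * lap (fun y => u t y j) x - μ * pd j (divg (u t)) x
          + pd j (ϱ t) x = 0

/-- Continuity in time with values in `H^s`. -/
def ContInHs (s : ℝ) (I : Set ℝ) (f : ℝ → E2 → ℝ) : Prop :=
  ∀ t ∈ I, Tendsto (fun τ => hsNorm s fun x => f τ x - f t x) (nhdsWithin t I) (nhds 0)

/-- Continuity in time with values in `H^s`, vector-field version. -/
def ContInHsVec (s : ℝ) (I : Set ℝ) (u : ℝ → E2 → E2) : Prop :=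
  ∀ i : Fin 2, ContInHs s I fun t x => u t x i

/-- `L²` norm of a complex-valued function on `ℝ²`. -/
def l2NormC (h : E2 → ℂ) : ℝ := Real.sqrt (∫ x : E2, ‖h x‖ ^ 2)

/-- `L^∞` norm of a real-valued function on `ℝ²`. -/
def linfNorm (h : E2 → ℝ) : ℝ := (eLpNorm h ⊤ volume).toReal

/-- Inverse Fourier transform on `ℝ²` (for the above convention). -/
def invFt2 (F : E2 → ℂ) (x : E2) : ℂ :=
  (((2 * Real.pi) ^ 2 : ℝ) : ℂ)⁻¹ * ∫ ξ : E2, Complex.exp (Complex.I * (⟪x, ξ⟫ : ℂ)) * F ξ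

/-- `Λ^s = (−Δ)^{s/2}`: the Fourier multiplier with symbol `|ξ|^s`. -/
def lamPow (s : ℝ) (f : E2 → ℂ) : E2 → ℂ :=
  fun x => invFt2 (fun ξ => ((‖ξ‖ ^ s : ℝ) : ℂ) * ft2 f ξ) x

/-- Partial derivative `∂ᵢ` of a complex-valued function on `ℝ²`. -/
def pdC (i : Fin 2) (h : E2 → ℂ) (x : E2) : ℂ := fderiv ℝ h x (EuclideanSpace.single i 1)

/-- Fourier transform on `ℝ`, convention `f̂(ξ) = ∫ e^{-i x ξ} f(x) dx`. -/
def ft1 (f : ℝ → ℂ) (ξ : ℝ) : ℂ :=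
  ∫ x : ℝ, Complex.exp (-Complex.I * ((x * ξ : ℝ) : ℂ)) * f x

/-- The standing assumptions on the bump function `φ`: its Fourier transform is
even, real-valued, non-negative, equal to `1` on `{|ξ| ≤ 1/4}` and to `0` on `{|ξ| ≥ 1/2}`. -/
def GoodBump (φ : ℝ → ℝ) : Prop :=
  (∀ ξ : ℝ, (ft1 (fun x => (φ x : ℂ)) ξ).im = 0) ∧
  (∀ ξ : ℝ, 0 ≤ (ft1 (fun x => (φ x : ℂ)) ξ).re) ∧
  (∀ ξ : ℝ, ft1 (fun x => (φ x : ℂ)) (-ξ) = ft1 (fun x => (φ x : ℂ)) ξ) ∧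
  (∀ ξ : ℝ, |ξ| ≤ 1 / 4 → ft1 (fun x => (φ x : ℂ)) ξ = 1) ∧
  (∀ ξ : ℝ, 1 / 2 ≤ |ξ| → ft1 (fun x => (φ x : ℂ)) ξ = 0)

/-- `f_n(x) = 2^{-ns} φ(x₁) sin(2ⁿ x₁) φ(x₂)`. -/
def fSeq (s : ℝ) (φ : ℝ → ℝ) (n : ℕ) : E2 → ℝ := fun x =>
  (2 : ℝ) ^ (-(n : ℝ) * s) * (φ (x 0) * Real.sin ((2 : ℝ) ^ n * x 0) * φ (x 1))

/-- `g_n = 2^{-n} ∇(φ(x₁) φ(x₂))`. -/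
def gSeq (φ : ℝ → ℝ) (n : ℕ) : E2 → E2 := fun x =>
  (2 : ℝ) ^ (-(n : ℝ)) •
    (EuclideanSpace.equiv (Fin 2) ℝ).symm
      ![deriv φ (x 0) * φ (x 1), φ (x 0) * deriv φ (x 1)]

-- integrability of modulated integrable function
lemma integrable_mod {f : ℝ → ℝ} (hf : Integrable f) (η : ℝ) :
    Integrable (fun x : ℝ => Complex.exp (-Complex.I * ((x * η : ℝ) : ℂ)) * (f x : ℂ)) := by
  refine hf.ofReal.bdd_mul (c := 1) ?_ (Filter.Eventually.of_forall fun x => ?_)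
  · exact (Complex.continuous_exp.comp (by continuity)).aestronglyMeasurable
  · rw [Complex.norm_exp]
    simp

-- modulation identity
lemma ft1_mul_sin {f : ℝ → ℝ} (hf : Integrable f) (a ξ : ℝ) :
    ft1 (fun x => ((f x * Real.sin (a * x) : ℝ) : ℂ)) ξ
      = (ft1 (fun x => (f x : ℂ)) (ξ - a) - ft1 (fun x => (f x : ℂ)) (ξ + a)) / (2 * Complex.I) := by
  unfold ft1
  rw [← integral_sub (integrable_mod hf (ξ - a)) (integrable_mod hf (ξ + a)), ← integral_div]
  congr 1
  ext x
  have h1 : (-Complex.I * ((x * (ξ - a) : ℝ) : ℂ))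
      = (-Complex.I * ((x * ξ : ℝ) : ℂ)) + (((a * x : ℝ) : ℂ) * Complex.I) := by
    push_cast; ring
  have h2 : (-Complex.I * ((x * (ξ + a) : ℝ) : ℂ))
      = (-Complex.I * ((x * ξ : ℝ) : ℂ)) + (-(((a * x : ℝ) : ℂ) * Complex.I)) := by
    push_cast; ring
  rw [h1, h2, Complex.exp_add, Complex.exp_add]
  push_cast [Complex.ofReal_sin, Complex.sin]
  rw [Complex.exp_neg]
  have hne : Complex.exp (((a : ℂ) * x) * Complex.I) ≠ 0 := Complex.exp_ne_zero _
  field_simp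
  ring_nf
  simp [Complex.I_sq]
  ring_nf
  rw [mul_assoc, ← Complex.exp_add]
  norm_num

lemma ft2_factor (F G : ℝ → ℂ) (ξ : E2) :
    ft2 (fun x : E2 => F (x 0) * G (x 1)) ξ = ft1 F (ξ 0) * ft1 G (ξ 1) := by
  unfold ft2 ft1
  have mp : MeasurePreserving
      (fun x : E2 => ((MeasurableEquiv.finTwoArrow : (Fin 2 → ℝ) ≃ᵐ ℝ × ℝ)
        ((MeasurableEquiv.toLp 2 (Fin 2 → ℝ)).symm x))) volume volume :=
    (volume_preserving_finTwoArrow ℝ).comp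
      (EuclideanSpace.volume_preserving_symm_measurableEquiv_toLp (Fin 2))
  have emb : MeasurableEmbedding
      (fun x : E2 => ((MeasurableEquiv.finTwoArrow : (Fin 2 → ℝ) ≃ᵐ ℝ × ℝ)
        ((MeasurableEquiv.toLp 2 (Fin 2 → ℝ)).symm x))) :=
    ((MeasurableEquiv.toLp 2 (Fin 2 → ℝ)).symm.trans
      (MeasurableEquiv.finTwoArrow : (Fin 2 → ℝ) ≃ᵐ ℝ × ℝ)).measurableEmbedding
  have key := mp.integral_comp emb
    (fun p : ℝ × ℝ => (Complex.exp (-Complex.I * ((p.1 * ξ 0 : ℝ) : ℂ)) * F p.1) *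
      (Complex.exp (-Complex.I * ((p.2 * ξ 1 : ℝ) : ℂ)) * G p.2))
  rw [← integral_prod_mul, ← Measure.volume_eq_prod, ← key]
  congr 1
  ext x
  have hinner : (⟪x, ξ⟫ : ℝ) = x 0 * ξ 0 + x 1 * ξ 1 := by
    simp [PiLp.inner_apply, RCLike.inner_apply, Fin.sum_univ_two]; ring
  simp only [MeasurableEquiv.finTwoArrow_apply, MeasurableEquiv.coe_toLp_symm, hinner]
  push_cast
  rw [show (-Complex.I * ((x 0 * ξ 0 : ℂ) + (x 1 * ξ 1 : ℂ)))
      = (-Complex.I * (x 0 * ξ 0 : ℂ)) + (-Complex.I * (x 1 * ξ 1 : ℂ)) by ring,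
    Complex.exp_add]
  ring


/-- **Spectral support of `f̃_n`**: if `φ` is a real-valued Schwartz function on `ℝ` whose
Fourier transform vanishes outside `[−1/2, 1/2]` and `n ≥ 1`, then the Fourier transform of
`f̃_n(x₁,x₂) = φ(x₁) sin(2ⁿx₁) φ(x₂)` is supported in the annulus
`C_n = {ξ : 2ⁿ − 1 ≤ |ξ| ≤ 2ⁿ + 1}`. -/
theorem spectral_support_ftilde (φ : SchwartzMap ℝ ℝ)
    (hφ : ∀ ξ : ℝ, ξ ∉ Set.Icc (-(1 / 2) : ℝ) (1 / 2) → ft1 (fun x => (φ x : ℂ)) ξ = 0)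
    (n : ℕ) (hn : 1 ≤ n) :
    Function.support
        (ft2 fun x : E2 => ((φ (x 0) * Real.sin ((2 : ℝ) ^ n * x 0) * φ (x 1) : ℝ) : ℂ))
      ⊆ {ξ : E2 | (2 : ℝ) ^ n - 1 ≤ ‖ξ‖ ∧ ‖ξ‖ ≤ (2 : ℝ) ^ n + 1} := by
  intro ξ hξ
  rw [Function.mem_support] at hξ
  have hfac : (ft2 fun x : E2 =>
      ((φ (x 0) * Real.sin ((2 : ℝ) ^ n * x 0) * φ (x 1) : ℝ) : ℂ)) ξ
      = ft1 (fun x => ((φ x * Real.sin ((2 : ℝ) ^ n * x) : ℝ) : ℂ)) (ξ 0)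
        * ft1 (fun x => (φ x : ℂ)) (ξ 1) := by
    rw [← ft2_factor]
    congr 1
    ext x
    push_cast
    ring
  rw [hfac, mul_ne_zero_iff] at hξ
  obtain ⟨hF, hG⟩ := hξ
  have hξ1 : ξ 1 ∈ Set.Icc (-(1 / 2) : ℝ) (1 / 2) := by
    by_contra h; exact hG (hφ _ h)
  have hcases : (ξ 0 - 2 ^ n) ∈ Set.Icc (-(1 / 2) : ℝ) (1 / 2) ∨
      (ξ 0 + 2 ^ n) ∈ Set.Icc (-(1 / 2) : ℝ) (1 / 2) := by
    by_contra hc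
    push_neg at hc
    apply hF
    rw [ft1_mul_sin φ.integrable, hφ _ hc.1, hφ _ hc.2]
    simp
  rw [Set.mem_Icc] at hξ1
  have hnsq : ‖ξ‖ ^ 2 = (ξ 0) ^ 2 + (ξ 1) ^ 2 := by
    rw [EuclideanSpace.norm_eq, Real.sq_sqrt (by positivity)]
    simp [Fin.sum_univ_two, Real.norm_eq_abs, sq_abs]
  have h2n : (1 : ℝ) ≤ 2 ^ n := one_le_pow₀ (by norm_num)
  have hnn : (0 : ℝ) ≤ ‖ξ‖ := norm_nonneg ξ
  rcases hcases with h | h <;> rw [Set.mem_Icc] at h <;>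
    exact ⟨by nlinarith [hnsq, h2n, hnn, sq_nonneg (ξ 1), h.1, h.2, hξ1.1, hξ1.2],
      by nlinarith [hnsq, h2n, hnn, sq_nonneg (ξ 1), h.1, h.2, hξ1.1, hξ1.2]⟩
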